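/- Let W, V ∈ ℝ^{n×k} have orthonormal columns with ‖WWᵀ − VVᵀ‖₂ ≤ ε. Suppose 𝒞 ⊆ {1,…,n} is a set of k indices such that the k×k matrix (Vᵀ)_{:,𝒞} (the submatrix of Vᵀ formed by the columns indexed by 𝒞) has smallest singular value strictly greater than ε. Then the k×k matrix (Wᵀ)_{:,𝒞} is invertible, and hence the columns of WWᵀ indexed by 𝒞 span the column space of W. -/
import Mathlib


open Matrix BigOperators

noncomputable def vecNorm {m : ℕ} (v : Fin m → ℝ) : ℝ :=
  Real.sqrt (∑ i, v i ^ 2)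

noncomputable def frobNorm {m n : ℕ} (A : Matrix (Fin m) (Fin n) ℝ) : ℝ :=
  Real.sqrt (∑ i, ∑ j, A i j ^ 2)

/-- spectral (operator) norm w.r.t. Euclidean norms -/
noncomputable def specNorm {m n : ℕ} (A : Matrix (Fin m) (Fin n) ℝ) : ℝ :=
  sSup {r | ∃ x : Fin n → ℝ, vecNorm x ≤ 1 ∧ r = vecNorm (A.mulVec x)}

/-- smallest singular value (for matrices with at least as many rows as columns) -/
noncomputable def sMin {m n : ℕ} (A : Matrix (Fin m) (Fin n) ℝ) : ℝ :=
  sInf {r | ∃ x : Fin n → ℝ, vecNorm x = 1 ∧ r = vecNorm (A.mulVec x)}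

lemma vecNorm_nonneg {m : ℕ} (v : Fin m → ℝ) : 0 ≤ vecNorm v := Real.sqrt_nonneg _

lemma sq_vecNorm {m : ℕ} (v : Fin m → ℝ) : vecNorm v ^ 2 = ∑ i, v i ^ 2 :=
  Real.sq_sqrt (Finset.sum_nonneg fun _ _ => sq_nonneg _)

lemma vecNorm_eq_norm {m : ℕ} (v : Fin m → ℝ) :
    vecNorm v = ‖(WithLp.equiv 2 (Fin m → ℝ)).symm v‖ := by
  rw [EuclideanSpace.norm_eq]
  unfold vecNorm
  congr 1
  refine Finset.sum_congr rfl fun i _ => ?_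
  rw [Real.norm_eq_abs, sq_abs]
  rfl

lemma vecNorm_add_le {m : ℕ} (u v : Fin m → ℝ) :
    vecNorm (u + v) ≤ vecNorm u + vecNorm v := by
  simp only [vecNorm_eq_norm]
  exact norm_add_le _ _

lemma vecNorm_neg {m : ℕ} (v : Fin m → ℝ) : vecNorm (-v) = vecNorm v := by
  simp only [vecNorm_eq_norm]; exact norm_neg _

lemma vecNorm_zero {m : ℕ} : vecNorm (0 : Fin m → ℝ) = 0 := by
  simp [vecNorm]

lemma vecNorm_eq_zero {m : ℕ} {v : Fin m → ℝ} (h : vecNorm v = 0) : v = 0 := by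
  rw [vecNorm_eq_norm] at h
  exact (WithLp.equiv 2 (Fin m → ℝ)).symm.injective (norm_eq_zero.mp h)

lemma vecNorm_smul {m : ℕ} (t : ℝ) (v : Fin m → ℝ) :
    vecNorm (t • v) = |t| * vecNorm v := by
  simp only [vecNorm_eq_norm]
  rw [show (WithLp.equiv 2 (Fin m → ℝ)).symm (t • v)
      = t • (WithLp.equiv 2 (Fin m → ℝ)).symm v from rfl,
    norm_smul, Real.norm_eq_abs]

lemma vecNorm_mulVec_le {m n : ℕ} (A : Matrix (Fin m) (Fin n) ℝ) (x : Fin n → ℝ) :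
    vecNorm (A.mulVec x) ≤ frobNorm A * vecNorm x := by
  have h2 : 0 ≤ frobNorm A * vecNorm x :=
    mul_nonneg (Real.sqrt_nonneg _) (vecNorm_nonneg _)
  have h1 : vecNorm (A.mulVec x) ^ 2 ≤ (frobNorm A * vecNorm x) ^ 2 := by
    rw [mul_pow, sq_vecNorm, sq_vecNorm]
    rw [show frobNorm A ^ 2 = ∑ i, ∑ j, A i j ^ 2 from
      Real.sq_sqrt (Finset.sum_nonneg fun _ _ => Finset.sum_nonneg fun _ _ => sq_nonneg _)]
    rw [Finset.sum_mul]
    refine Finset.sum_le_sum fun i _ => ?_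
    simpa [Matrix.mulVec, dotProduct] using Finset.sum_mul_sq_le_sq_mul_sq Finset.univ (A i) x
  calc vecNorm (A.mulVec x) = Real.sqrt (vecNorm (A.mulVec x) ^ 2) :=
        (Real.sqrt_sq (vecNorm_nonneg _)).symm
    _ ≤ Real.sqrt ((frobNorm A * vecNorm x) ^ 2) := Real.sqrt_le_sqrt h1
    _ = frobNorm A * vecNorm x := Real.sqrt_sq h2

lemma le_specNorm {m n : ℕ} (A : Matrix (Fin m) (Fin n) ℝ) {x : Fin n → ℝ}
    (hx : vecNorm x ≤ 1) : vecNorm (A.mulVec x) ≤ specNorm A := by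
  apply le_csSup
  · refine ⟨frobNorm A, ?_⟩
    rintro r ⟨y, hy, rfl⟩
    calc vecNorm (A.mulVec y) ≤ frobNorm A * vecNorm y := vecNorm_mulVec_le _ _
      _ ≤ frobNorm A * 1 := mul_le_mul_of_nonneg_left hy (Real.sqrt_nonneg _)
      _ = frobNorm A := mul_one _
  · exact ⟨x, hx, rfl⟩

lemma sMin_le {m n : ℕ} (A : Matrix (Fin m) (Fin n) ℝ) {x : Fin n → ℝ}
    (hx : vecNorm x = 1) : sMin A ≤ vecNorm (A.mulVec x) :=
  csInf_le ⟨0, by rintro r ⟨y, _, rfl⟩; exact vecNorm_nonneg _⟩ ⟨x, hx, rfl⟩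

lemma norm_proj {n k : ℕ} (W : Matrix (Fin n) (Fin k) ℝ) (hW : Wᵀ * W = 1)
    (y : Fin n → ℝ) :
    vecNorm ((W * Wᵀ).mulVec y) = vecNorm (Wᵀ.mulVec y) := by
  unfold vecNorm
  congr 1
  have e1 : ∀ (m : ℕ) (u : Fin m → ℝ), ∑ i, u i ^ 2 = u ⬝ᵥ u := by
    intro m u; simp [dotProduct, sq]
  rw [e1, e1]
  have hWW : W * Wᵀ * (W * Wᵀ) = W * Wᵀ := by
    rw [Matrix.mul_assoc, ← Matrix.mul_assoc Wᵀ, hW, Matrix.one_mul]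
  calc (W * Wᵀ).mulVec y ⬝ᵥ (W * Wᵀ).mulVec y
      = vecMul ((W * Wᵀ).mulVec y) (W * Wᵀ) ⬝ᵥ y := Matrix.dotProduct_mulVec _ _ _
    _ = (W * Wᵀ).mulVec ((W * Wᵀ).mulVec y) ⬝ᵥ y := by
        rw [show vecMul ((W * Wᵀ).mulVec y) (W * Wᵀ)
            = vecMul ((W * Wᵀ).mulVec y) (W * Wᵀ)ᵀ by
          rw [Matrix.transpose_mul, Matrix.transpose_transpose]]
        rw [Matrix.vecMul_transpose]
    _ = (W * Wᵀ).mulVec y ⬝ᵥ y := by rw [Matrix.mulVec_mulVec, hWW]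
    _ = W.mulVec (Wᵀ.mulVec y) ⬝ᵥ y := by rw [Matrix.mulVec_mulVec]
    _ = vecMul (Wᵀ.mulVec y) Wᵀ ⬝ᵥ y := by rw [Matrix.vecMul_transpose]
    _ = Wᵀ.mulVec y ⬝ᵥ Wᵀ.mulVec y := (Matrix.dotProduct_mulVec _ _ _).symm

lemma span_cols_mul_le {n k l : ℕ} (M : Matrix (Fin n) (Fin k) ℝ)
    (N : Matrix (Fin k) (Fin l) ℝ) :
    Submodule.span ℝ (Set.range (fun j : Fin l => fun i : Fin n => (M * N) i j))
      ≤ Submodule.span ℝ (Set.range (fun j : Fin k => fun i : Fin n => M i j)) := by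
  rw [Submodule.span_le]
  rintro _ ⟨j, rfl⟩
  show (fun i => (M * N) i j) ∈ _
  have h : (fun i => (M * N) i j) = ∑ l', N l' j • (fun i => M i l') := by
    funext i
    simp [Matrix.mul_apply, Finset.sum_apply, mul_comm]
  rw [h]
  exact Submodule.sum_mem _ fun l' _ =>
    Submodule.smul_mem _ _ (Submodule.subset_span ⟨l', rfl⟩)

/-- pivoting lemma. If the k×k submatrix of Vᵀ selected by the
injective index map c has smallest singular value > ε ≥ ‖WWᵀ − VVᵀ‖₂, then the
corresponding submatrix of Wᵀ is invertible, and the columns of WWᵀ indexed by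
c span the column space of W. -/
theorem pivot_selection
    (n k : ℕ) (ε : ℝ)
    (W V : Matrix (Fin n) (Fin k) ℝ)
    (hW : Wᵀ * W = 1) (hV : Vᵀ * V = 1)
    (hproj : specNorm (W * Wᵀ - V * Vᵀ) ≤ ε)
    (c : Fin k → Fin n) (hc : Function.Injective c)
    (hσ : ε < sMin ((Vᵀ).submatrix id c)) :
    IsUnit ((Wᵀ).submatrix id c) ∧
      Submodule.span ℝ (Set.range (fun j : Fin k => fun i : Fin n => (W * Wᵀ) i (c j)))
        = Submodule.span ℝ (Set.range (fun j : Fin k => fun i : Fin n => W i j)) := by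
  set A := (Wᵀ).submatrix id c with hAdef
  set B := (Vᵀ).submatrix id c with hBdef
  have key : ∀ x : Fin k → ℝ, vecNorm x = 1 → sMin B - ε ≤ vecNorm (A.mulVec x) := by
    intro x hx
    set y : Fin n → ℝ := fun p => ∑ j, if c j = p then x j else 0 with hydef
    have hyc : ∀ j, y (c j) = x j := by
      intro j
      simp only [hydef]
      rw [Finset.sum_eq_single j]
      · simp
      · intro b _ hb; rw [if_neg (fun h => hb (hc h))]
      · simp
    have hy0 : ∀ p, p ∉ Finset.univ.image c → y p = 0 := by
      intro p hp
      simp only [hydef]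
      refine Finset.sum_eq_zero fun j _ => ?_
      have : c j ≠ p := fun h => hp (by rw [← h]; exact Finset.mem_image_of_mem c (Finset.mem_univ j))
      simp [this]
    have hysum : ∑ p, y p ^ 2 = ∑ j, x j ^ 2 := by
      calc ∑ p, y p ^ 2 = ∑ p ∈ Finset.univ.image c, y p ^ 2 :=
            (Finset.sum_subset (Finset.subset_univ _)
              (fun p _ hp => by rw [hy0 p hp]; ring)).symm
        _ = ∑ j, y (c j) ^ 2 :=
            Finset.sum_image fun a _ b _ h => hc h
        _ = ∑ j, x j ^ 2 := by simp [hyc]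
    have hny : vecNorm y = 1 := by
      unfold vecNorm
      rw [hysum, ← sq_vecNorm, hx, one_pow, Real.sqrt_one]
    have hmul : ∀ (M : Matrix (Fin n) (Fin k) ℝ),
        Mᵀ.mulVec y = (Mᵀ.submatrix id c).mulVec x := by
      intro M
      funext i
      simp only [mulVec, dotProduct, hydef, submatrix_apply, id_eq, transpose_apply]
      calc ∑ p, M p i * ∑ j, (if c j = p then x j else 0)
          = ∑ p, ∑ j, (if c j = p then M p i * x j else 0) := by
            refine Finset.sum_congr rfl fun p _ => ?_
            rw [Finset.mul_sum]
            refine Finset.sum_congr rfl fun j _ => ?_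
            split <;> simp
        _ = ∑ j, ∑ p, (if c j = p then M p i * x j else 0) := Finset.sum_comm
        _ = ∑ j, M (c j) i * x j := by simp
    have hAx : vecNorm (A.mulVec x) = vecNorm ((W * Wᵀ).mulVec y) := by
      rw [norm_proj W hW y, hmul W]
    have hBx : vecNorm (B.mulVec x) = vecNorm ((V * Vᵀ).mulVec y) := by
      rw [norm_proj V hV y, hmul V]
    have htri : vecNorm ((V * Vᵀ).mulVec y)
        ≤ vecNorm ((W * Wᵀ).mulVec y) + vecNorm ((W * Wᵀ - V * Vᵀ).mulVec y) := by
      have hsplit : (V * Vᵀ).mulVec y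
          = (W * Wᵀ).mulVec y + (-((W * Wᵀ - V * Vᵀ).mulVec y)) := by
        rw [Matrix.sub_mulVec]; abel
      rw [hsplit]
      exact (vecNorm_add_le _ _).trans (by rw [vecNorm_neg])
    have hpert : vecNorm ((W * Wᵀ - V * Vᵀ).mulVec y) ≤ ε :=
      (le_specNorm _ (le_of_eq hny)).trans hproj
    have hBlow : sMin B ≤ vecNorm (B.mulVec x) := sMin_le _ hx
    rw [hBx] at hBlow
    rw [hAx]
    linarith
  have hdet : A.det ≠ 0 := by
    intro h
    obtain ⟨v, hv0, hv⟩ := (Matrix.exists_mulVec_eq_zero_iff).mpr h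
    have hvn : vecNorm v ≠ 0 := fun h' => hv0 (vecNorm_eq_zero h')
    have h1 : vecNorm ((vecNorm v)⁻¹ • v) = 1 := by
      rw [vecNorm_smul, abs_of_nonneg (inv_nonneg.2 (vecNorm_nonneg v))]
      field_simp
    have hk := key _ h1
    have hz : A.mulVec ((vecNorm v)⁻¹ • v) = 0 := by
      rw [Matrix.mulVec_smul, hv, smul_zero]
    rw [hz, vecNorm_zero] at hk
    linarith
  have hUnit : IsUnit A := (Matrix.isUnit_iff_isUnit_det A).mpr (isUnit_iff_ne_zero.mpr hdet)
  refine ⟨hUnit, ?_⟩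
  have hWA : (fun j : Fin k => fun i : Fin n => (W * Wᵀ) i (c j))
      = (fun j : Fin k => fun i : Fin n => (W * A) i j) := by
    funext j i
    simp [Matrix.mul_apply, hAdef]
  have hWinv : (W * A) * A⁻¹ = W := by
    rw [Matrix.mul_assoc, Matrix.mul_nonsing_inv A (isUnit_iff_ne_zero.mpr hdet),
      Matrix.mul_one]
  apply le_antisymm
  · rw [hWA]
    exact span_cols_mul_le W A
  · have h2 := span_cols_mul_le (W * A) A⁻¹
    rw [hWinv, ← hWA] at h2
    exact h2
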